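/- With d(z) = 2a₁θ(z-1) + (1-2a₀θ)z^{(σ)}, γ(z) = 1 + (a₁(1-z) + a₀z^{(σ)})/d(z), z^{(σ)} = σ + (1-σ)z, a₁ > 0, a₀ ≥ 0, d₀ = a₀/a₁, d₁ = 2/a₁, the polynomial identity d(z)²(γ(z)² - 1) = a₁²(1 - z + d₀z^{(σ)})[(1-4θ)(1-z) + (d₁ + d₀(1-4θ))z^{(σ)}] = a₁²δ(α z² - 2βz + 1) holds, where δ = (1+σd₀)[(1+σd₀)(1-4θ) + σd₁], α = α₀α₁, β = (α₀+α₁)/2, α₀ = 1 - d₀/(1+σd₀), α₁ = 1 - (d₀(1-4θ)+d₁)/((1+σd₀)(1-4θ)+σd₁). -/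

import Mathlib

/-- the algebraic identity
`d(z)²(γ(z)² - 1) = a₁²(1 - z + d₀z^{(σ)})[(1-4θ)(1-z) + (d₁ + d₀(1-4θ))z^{(σ)}]
 = a₁²δ(αz² - 2βz + 1)` underlying the discrete TBC kernel. -/
theorem stmt_9 (a₁ a₀ θ σ : ℝ) (ha₁ : 0 < a₁) (ha₀ : 0 ≤ a₀)
    (d₀ d₁ δ α₀ α₁ α β : ℝ)
    (hd₀ : d₀ = a₀/a₁) (hd₁ : d₁ = 2/a₁)
    (hδ : δ = (1 + σ*d₀)*((1 + σ*d₀)*(1 - 4*θ) + σ*d₁))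
    (hα₀ : α₀ = 1 - d₀/(1 + σ*d₀))
    (hα₁ : α₁ = 1 - (d₀*(1 - 4*θ) + d₁)/((1 + σ*d₀)*(1 - 4*θ) + σ*d₁))
    (hα : α = α₀*α₁) (hβ : β = (α₀ + α₁)/2) (hδ0 : δ ≠ 0) :
    ∀ z : ℝ,
      2*a₁*θ*(z - 1) + (1 - 2*a₀*θ)*(σ + (1 - σ)*z) ≠ 0 →
      ((2*a₁*θ*(z - 1) + (1 - 2*a₀*θ)*(σ + (1 - σ)*z))^2 *
        ((1 + (a₁*(1 - z) + a₀*(σ + (1 - σ)*z)) /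
            (2*a₁*θ*(z - 1) + (1 - 2*a₀*θ)*(σ + (1 - σ)*z)))^2 - 1)
        = a₁^2 * (1 - z + d₀*(σ + (1 - σ)*z)) *
            ((1 - 4*θ)*(1 - z) + (d₁ + d₀*(1 - 4*θ))*(σ + (1 - σ)*z))
      ∧ a₁^2 * (1 - z + d₀*(σ + (1 - σ)*z)) *
            ((1 - 4*θ)*(1 - z) + (d₁ + d₀*(1 - 4*θ))*(σ + (1 - σ)*z))
        = a₁^2 * δ * (α*z^2 - 2*β*z + 1)) := by
  intro z hz
  have ha₁' : a₁ ≠ 0 := ne_of_gt ha₁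
  have hp : (1 + σ*d₀) ≠ 0 := by
    intro h; apply hδ0; rw [hδ, h]; ring
  have hq : ((1 + σ*d₀)*(1 - 4*θ) + σ*d₁) ≠ 0 := by
    intro h; apply hδ0; rw [hδ, h]; ring
  constructor
  · subst hd₀ hd₁
    have hz' : 2 * a₁ * θ * (z - 1) + (1 - 2 * θ * a₀) * (σ + z * (1 - σ)) ≠ 0 := by
      convert hz using 2 <;> ring
    field_simp
    ring
  · subst hα hβ hα₀ hα₁ hδ
    have hp' : 1 + d₀ * σ ≠ 0 := by convert hp using 1; ring
    have hq' : (1 - 4 * θ) * (1 + d₀ * σ) + σ * d₁ ≠ 0 := by convert hq using 1; ring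
    field_simp
    ring
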